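/- Size of the constructed stream (displayed inequality in Section 5.2 of the paper): For t ≥ 2, the total number of distinct sets in the family F(π, b) satisfies |F(π, b)| ≤ t^{k−1} + Σ_{i=2}^{k−1} t^{k−i} + ℓ·t^{k−2} + 1, and hence (t − 1)·|F(π, b)| ≤ t^k − 1 + ℓ·t^{k−2}·(t − 1). -/
import Mathlib


/-- The cylinder of a word `w` over `Fin t` in the universe
`X = (Fin (k−1) → Fin t) × Fin l`: the pairs `(x, i)` such that the leaf `x` agrees
with `w` on the first `length w` coordinates. -/
def cylX (k t l : ℕ) (w : List (Fin t)) : Set ((Fin (k - 1) → Fin t) × Fin l) :=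
  {p | ∀ i : Fin (k - 1), ∀ h : (i : ℕ) < w.length, p.1 i = w.get ⟨i, h⟩}

/-- The `π`-path words: `w_0 = []` and `w_{i+1} = w_i ++ [π(w_i)]`. -/
def pathWord {t : ℕ} (π : List (Fin t) → Fin t) : ℕ → List (Fin t)
  | 0 => []
  | i + 1 => pathWord π i ++ [π (pathWord π i)]

/-- The leaf `v_π` determined by the `π`-path: `v_π(i) = π(w_i)`. -/
def pathLeaf (k t : ℕ) (π : List (Fin t) → Fin t) : Fin (k - 1) → Fin t :=
  fun i => π (pathWord π (i : ℕ))

/-- The set family `F(π, b)`: (i) the root set `X \ C([π([])])`; (ii) the sets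
`C(w) \ C(w ++ [π(w)])` for words `w` with `1 ≤ |w| ≤ k−2`; (iii) the leaf cylinders `C(x)`
for leaves `x` with `b(x) = true`; (iv) the singletons `{e}` for `e ∈ C([π([])])`. -/
def coverFamily (k t l : ℕ) (π : List (Fin t) → Fin t)
    (b : (Fin (k - 1) → Fin t) → Bool) : Set (Set ((Fin (k - 1) → Fin t) × Fin l)) :=
  {S | S = Set.univ \ cylX k t l [π []]} ∪
  {S | ∃ w : List (Fin t), 1 ≤ w.length ∧ w.length ≤ k - 2 ∧
        S = cylX k t l w \ cylX k t l (w ++ [π w])} ∪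
  {S | ∃ x : Fin (k - 1) → Fin t, b x = true ∧ S = cylX k t l (List.ofFn x)} ∪
  {S | ∃ e ∈ cylX k t l [π []], S = {e}}

lemma my_ncard_le_range {α : Type*} {Y : Type*} [Fintype Y] {f : Y → α} {s : Set α}
    (h : s ⊆ Set.range f) : s.ncard ≤ Fintype.card Y := by
  calc s.ncard ≤ (Set.range f).ncard := Set.ncard_le_ncard h (Set.finite_range f)
    _ = (f '' Set.univ).ncard := by rw [Set.image_univ]
    _ ≤ Set.univ.ncard := Set.ncard_image_le Set.finite_univ
    _ = Fintype.card Y := by rw [Set.ncard_univ, Nat.card_eq_fintype_card]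

lemma my_geom (t : ℕ) (ht : 1 ≤ t) : ∀ n, (t - 1) * ∑ j ∈ Finset.range n, t ^ j = t ^ n - 1
  | 0 => by simp
  | n + 1 => by
    have ih := my_geom t ht n
    have h1 : 1 ≤ t ^ n := Nat.one_le_pow _ _ (by omega)
    have h2 : t ^ (n + 1) = t ^ n * t := pow_succ t n
    have h3 : (t - 1) * t ^ n = t ^ n * t - t ^ n := by
      rw [Nat.sub_mul, one_mul, Nat.mul_comm]
    have h4 : t ^ n ≤ t ^ n * t := Nat.le_mul_of_pos_right _ (by omega)
    rw [Finset.sum_range_succ, Nat.mul_add, ih, h3]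
    omega

lemma my_reindex (t m : ℕ) :
    ∑ i ∈ Finset.Icc 2 (m + 1), t ^ (m + 2 - i) = ∑ j ∈ Finset.range m, t ^ (j + 1) := by
  refine Finset.sum_nbij' (fun i => m + 1 - i) (fun j => m + 1 - j) ?_ ?_ ?_ ?_ ?_ <;>
    intro a ha <;> simp [Finset.mem_Icc, Finset.mem_range] at ha ⊢ <;>
    first
      | omega
      | (congr 1; omega)

lemma my_subcard (m t : ℕ) :
    Fintype.card ({j : Fin (m + 1) // j ≠ ⟨0, Nat.succ_pos m⟩} → Fin t) = t ^ m := by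
  rw [Fintype.card_fun, Fintype.card_fin]
  congr 1
  have := Fintype.card_subtype_compl (fun j : Fin (m + 1) => j = ⟨0, Nat.succ_pos m⟩)
  simp only [Fintype.card_subtype_eq, Fintype.card_fin] at this
  exact this

/-- Size of the constructed stream (Section 5.2): the number of distinct sets in `F(π, b)`
is at most `t^{k−1} + Σ_{i=2}^{k−1} t^{k−i} + l·t^{k−2} + 1`, and hence
`(t − 1)·|F(π, b)| ≤ t^k − 1 + l·t^{k−2}·(t − 1)`. -/
theorem coverFamily_size_bound
    (k t l : ℕ) (hk : 2 ≤ k) (ht : 2 ≤ t) (hl : 1 ≤ l)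
    (π : List (Fin t) → Fin t) (b : (Fin (k - 1) → Fin t) → Bool) :
    (coverFamily k t l π b).ncard ≤
        t ^ (k - 1) + (∑ i ∈ Finset.Icc 2 (k - 1), t ^ (k - i)) + l * t ^ (k - 2) + 1 ∧
      (t - 1) * (coverFamily k t l π b).ncard ≤ t ^ k - 1 + l * t ^ (k - 2) * (t - 1) := by
  obtain ⟨m, rfl⟩ : ∃ m, k = m + 2 := ⟨k - 2, by omega⟩
  clear hk
  set z : Fin (m + 1) := ⟨0, Nat.succ_pos m⟩ with hz
  -- the four pieces
  set A : Set (Set ((Fin (m + 2 - 1) → Fin t) × Fin l)) :=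
    {S | S = Set.univ \ cylX (m + 2) t l [π []]} with hA
  set B : Set (Set ((Fin (m + 2 - 1) → Fin t) × Fin l)) :=
    {S | ∃ w : List (Fin t), 1 ≤ w.length ∧ w.length ≤ m + 2 - 2 ∧
        S = cylX (m + 2) t l w \ cylX (m + 2) t l (w ++ [π w])} with hB
  set C : Set (Set ((Fin (m + 2 - 1) → Fin t) × Fin l)) :=
    {S | ∃ x : Fin (m + 2 - 1) → Fin t, b x = true ∧ S = cylX (m + 2) t l (List.ofFn x)} with hC
  set D : Set (Set ((Fin (m + 2 - 1) → Fin t) × Fin l)) :=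
    {S | ∃ e ∈ cylX (m + 2) t l [π []], S = {e}} with hD
  have hcover : coverFamily (m + 2) t l π b = A ∪ B ∪ C ∪ D := rfl
  -- bound on A
  have hAcard : A.ncard = 1 := by
    rw [hA, Set.setOf_eq_eq_singleton, Set.ncard_singleton]
  -- bound on B
  have hBcard : B.ncard ≤ ∑ j ∈ Finset.range m, t ^ (j + 1) := by
    have hsub : B ⊆ Set.range (fun p : (j : Fin m) × (Fin ((j : ℕ) + 1) → Fin t) =>
        cylX (m + 2) t l (List.ofFn p.2) \
          cylX (m + 2) t l (List.ofFn p.2 ++ [π (List.ofFn p.2)])) := by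
      rintro S ⟨w, h1, h2, rfl⟩
      have hj : w.length - 1 < m := by omega
      have hlt : ∀ i : Fin (w.length - 1 + 1), (i : ℕ) < w.length :=
        fun i => lt_of_lt_of_le i.2 (by omega)
      have hw : List.ofFn (fun i : Fin (w.length - 1 + 1) => w.get ⟨i.1, hlt i⟩) = w := by
        apply List.ext_get (by simp; omega)
        intro n hn1 hn2
        rw [List.get_ofFn]
        rfl
      refine ⟨⟨⟨w.length - 1, hj⟩, fun i => w.get ⟨i.1, hlt i⟩⟩, ?_⟩
      show cylX (m + 2) t l (List.ofFn fun i : Fin (w.length - 1 + 1) => w.get ⟨i.1, hlt i⟩) \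
          cylX (m + 2) t l ((List.ofFn fun i : Fin (w.length - 1 + 1) => w.get ⟨i.1, hlt i⟩) ++
            [π (List.ofFn fun i : Fin (w.length - 1 + 1) => w.get ⟨i.1, hlt i⟩)]) =
          cylX (m + 2) t l w \ cylX (m + 2) t l (w ++ [π w])
      rw [hw]
    have := my_ncard_le_range hsub
    calc B.ncard ≤ Fintype.card ((j : Fin m) × (Fin ((j : ℕ) + 1) → Fin t)) := this
      _ = ∑ j : Fin m, t ^ ((j : ℕ) + 1) := by
          rw [Fintype.card_sigma]
          congr 1
          funext j
          rw [Fintype.card_fun, Fintype.card_fin, Fintype.card_fin]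
      _ = ∑ j ∈ Finset.range m, t ^ (j + 1) := Fin.sum_univ_eq_sum_range (fun j => t ^ (j + 1)) m
  -- bound on C
  have hCcard : C.ncard ≤ t ^ (m + 1) := by
    have hsub : C ⊆ Set.range (fun x : Fin (m + 2 - 1) → Fin t =>
        cylX (m + 2) t l (List.ofFn x)) := by
      rintro S ⟨x, _, rfl⟩; exact ⟨x, rfl⟩
    have := my_ncard_le_range hsub
    rwa [Fintype.card_fun, Fintype.card_fin, Fintype.card_fin] at this
  -- bound on D
  have hDcard : D.ncard ≤ l * t ^ m := by
    have hsub : D ⊆ Set.range (fun p : Fin l × ({j : Fin (m + 1) // j ≠ z} → Fin t) =>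
        ({((fun j : Fin (m + 1) => if h : j = z then π [] else p.2 ⟨j, h⟩ : Fin (m + 1) → Fin t),
          p.1)} : Set ((Fin (m + 2 - 1) → Fin t) × Fin l))) := by
      rintro S ⟨⟨x, i⟩, he, rfl⟩
      refine ⟨⟨i, fun j => x j.1⟩, ?_⟩
      have hx : (fun j : Fin (m + 1) =>
          if h : j = z then π [] else (fun j' : {j : Fin (m + 1) // j ≠ z} => x j'.1) ⟨j, h⟩)
          = x := by
        funext j
        by_cases h : j = z
        · rw [dif_pos h, h]
          exact (he z Nat.zero_lt_one).symm
        · rw [dif_neg h]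
      show ({((fun j : Fin (m + 1) =>
          if h : j = z then π [] else (fun j' : {j : Fin (m + 1) // j ≠ z} => x j'.1) ⟨j, h⟩), i)} :
          Set ((Fin (m + 2 - 1) → Fin t) × Fin l)) = {(x, i)}
      rw [hx]
    have := my_ncard_le_range hsub
    calc D.ncard ≤ Fintype.card (Fin l × ({j : Fin (m + 1) // j ≠ z} → Fin t)) := this
      _ = l * t ^ m := by rw [Fintype.card_prod, Fintype.card_fin, my_subcard]
  -- combine
  have hfinB : B.Finite := B.toFinite
  have hN : (coverFamily (m + 2) t l π b).ncard ≤
      1 + (∑ j ∈ Finset.range m, t ^ (j + 1)) + t ^ (m + 1) + l * t ^ m := by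
    rw [hcover]
    calc (A ∪ B ∪ C ∪ D).ncard ≤ (A ∪ B ∪ C).ncard + D.ncard := Set.ncard_union_le _ _
      _ ≤ (A ∪ B).ncard + C.ncard + D.ncard := by
          have := Set.ncard_union_le (A ∪ B) C; omega
      _ ≤ A.ncard + B.ncard + C.ncard + D.ncard := by
          have := Set.ncard_union_le A B; omega
      _ ≤ 1 + (∑ j ∈ Finset.range m, t ^ (j + 1)) + t ^ (m + 1) + l * t ^ m := by omega
  have hre : ∑ i ∈ Finset.Icc 2 (m + 1), t ^ (m + 2 - i) =
      ∑ j ∈ Finset.range m, t ^ (j + 1) := my_reindex t m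
  constructor
  · simp only [show m + 2 - 1 = m + 1 from rfl, show m + 2 - 2 = m from rfl]
    omega
  · have hkey : t ^ (m + 1) + (∑ j ∈ Finset.range m, t ^ (j + 1)) + 1 =
        ∑ j ∈ Finset.range (m + 2), t ^ j := by
      rw [Finset.sum_range_succ, Finset.sum_range_succ']
      simp
      omega
    have hg := my_geom t (by omega) (m + 2)
    have hmono : (t - 1) * (coverFamily (m + 2) t l π b).ncard ≤
        (t - 1) * (1 + (∑ j ∈ Finset.range m, t ^ (j + 1)) + t ^ (m + 1) + l * t ^ m) :=
      Nat.mul_le_mul_left _ hN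
    have heq : (t - 1) * (1 + (∑ j ∈ Finset.range m, t ^ (j + 1)) + t ^ (m + 1) + l * t ^ m)
        = t ^ (m + 2) - 1 + l * t ^ m * (t - 1) := by
      have h5 : 1 + (∑ j ∈ Finset.range m, t ^ (j + 1)) + t ^ (m + 1) + l * t ^ m
          = (∑ j ∈ Finset.range (m + 2), t ^ j) + l * t ^ m := by omega
      rw [h5, Nat.mul_add, hg, Nat.mul_comm (t - 1) (l * t ^ m)]
    rw [heq] at hmono
    simp only [show m + 2 - 2 = m from rfl]
    exact hmono
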